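/- Let X be a real random variable with E X = 0. Then for every x > 0, E[X; |X| ≤ x] = −E[X; |X| > x], and |E[X; |X| > x]| ≤ Σ_{j=0}^∞ 2^{j+1} x · P(|X| > 2^j x). -/

import Mathlib

open MeasureTheory Filter Topology Set

/-- if `E X = 0` then for every `x > 0`,
`E[X; |X| ≤ x] = -E[X; |X| > x]`, and
`|E[X; |X| > x]| ≤ ∑_{j≥0} 2^{j+1} x · P(|X| > 2^j x)` (dyadic annuli bound, the
right-hand side computed in `ℝ≥0∞`). -/
theorem truncated_mean_dyadic_bound
    {Ω : Type*} [MeasurableSpace Ω] (P : Measure Ω) [IsProbabilityMeasure P]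
    (X : Ω → ℝ) (hX : Measurable X) (hXint : Integrable X P)
    (hmean : ∫ ω, X ω ∂P = 0) (x : ℝ) (hx : 0 < x) :
    (∫ ω in {ω | |X ω| ≤ x}, X ω ∂P) = -∫ ω in {ω | x < |X ω|}, X ω ∂P ∧
    ENNReal.ofReal |∫ ω in {ω | x < |X ω|}, X ω ∂P| ≤
      ∑' j : ℕ, ENNReal.ofReal (2 ^ (j + 1) * x) * P {ω | 2 ^ j * x < |X ω|} := by
  have hA : MeasurableSet {ω | |X ω| ≤ x} := measurableSet_le hX.abs measurable_const
  have hcompl : {ω | |X ω| ≤ x}ᶜ = {ω | x < |X ω|} := by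
    ext ω; simp [not_le]
  constructor
  · have h := integral_add_compl hA hXint
    rw [hcompl, hmean] at h
    linarith
  · -- annuli
    set A : ℕ → Set Ω := fun j => {ω | 2 ^ j * x < |X ω| ∧ |X ω| ≤ 2 ^ (j + 1) * x} with hAdef
    have hAj : ∀ j, MeasurableSet (A j) := fun j =>
      (measurableSet_lt measurable_const hX.abs).inter (measurableSet_le hX.abs measurable_const)
    have hcover : {ω | x < |X ω|} = ⋃ j, A j := by
      ext ω
      simp only [mem_setOf_eq, mem_iUnion, hAdef]
      constructor
      · intro h
        have hex : ∃ n, |X ω| ≤ 2 ^ n * x := by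
          obtain ⟨n, hn⟩ := pow_unbounded_of_one_lt (|X ω| / x) (by norm_num : (1:ℝ) < 2)
          exact ⟨n, by rw [div_lt_iff₀ hx] at hn; linarith⟩
        classical
        have h0 : ¬ |X ω| ≤ 2 ^ 0 * x := by simpa using not_le.2 h
        let k := Nat.find hex
        have hk : |X ω| ≤ 2 ^ k * x := Nat.find_spec hex
        have hkpos : 0 < k := Nat.pos_of_ne_zero (by intro h'; exact h0 (hk.trans_eq (by rw [h'])))
        refine ⟨k - 1, ?_, ?_⟩
        · have := Nat.find_min hex (Nat.sub_lt hkpos one_pos)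
          exact not_le.mp this
        · simpa [Nat.sub_add_cancel hkpos] using hk
      · rintro ⟨j, hj, -⟩
        have : x ≤ 2 ^ j * x := le_mul_of_one_le_left hx.le (one_le_pow₀ (by norm_num))
        linarith
    have step1 : ENNReal.ofReal |∫ ω in {ω | x < |X ω|}, X ω ∂P| ≤
        ∫⁻ ω in {ω | x < |X ω|}, ‖X ω‖₊ ∂P := by
      rw [← Real.enorm_eq_ofReal_abs]
      exact enorm_integral_le_lintegral_enorm _
    have step2 : ∫⁻ ω in {ω | x < |X ω|}, ‖X ω‖₊ ∂P ≤
        ∑' j, ∫⁻ ω in A j, ‖X ω‖₊ ∂P := by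
      rw [hcover]
      exact lintegral_iUnion_le _ _
    have step3 : ∀ j, ∫⁻ ω in A j, ‖X ω‖₊ ∂P ≤
        ENNReal.ofReal (2 ^ (j + 1) * x) * P {ω | 2 ^ j * x < |X ω|} := by
      intro j
      calc ∫⁻ ω in A j, ‖X ω‖₊ ∂P
          ≤ ∫⁻ _ω in A j, ENNReal.ofReal (2 ^ (j + 1) * x) ∂P := by
            refine setLIntegral_mono measurable_const fun ω hω => ?_
            rw [← enorm_eq_nnnorm, Real.enorm_eq_ofReal_abs]
            exact ENNReal.ofReal_le_ofReal hω.2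
        _ = ENNReal.ofReal (2 ^ (j + 1) * x) * P (A j) := by
            rw [setLIntegral_const]
        _ ≤ ENNReal.ofReal (2 ^ (j + 1) * x) * P {ω | 2 ^ j * x < |X ω|} := by
            exact mul_le_mul_right (measure_mono fun ω hω => hω.1) _
    exact step1.trans (step2.trans (ENNReal.tsum_le_tsum step3))
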